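/- The gauging map preserves symmetric eigenstates: (a) for every ψ ∈ H_m with X(s)ψ = ψ for all s ∈ S, one has ‖G ψ‖² = (|S| / 2^{|I|}) · ‖ψ‖²; in particular G is injective on the symmetric subspace; and (b) if H is a symmetric operator on H_m and ψ is a symmetric vector with H ψ = λ ψ, then 𝒢[H] (G ψ) = |S| λ · (G ψ), so G maps symmetric eigenvectors of H to eigenvectors of 𝒢[H] with eigenvalue |S|λ. -/

import Mathlib

set_option linter.unusedSectionVars false

noncomputable section

namespace GaugingFractal

/-- The sign `(-1)^t` attached to a `ZMod 2` exponent. -/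
def sgn (t : ZMod 2) : ℂ := (-1 : ℂ) ^ t.val

lemma sgn_mul_self (t : ZMod 2) : sgn t * sgn t = 1 := by
  unfold sgn
  rw [← pow_add, ← two_mul, pow_mul]
  norm_num

lemma zmodfun_add_self {K : Type*} (k : K → ZMod 2) : k + k = 0 := by
  funext j
  exact CharTwo.add_self_eq_zero _

/-- Hilbert space of qubits labelled by a finite set `K`; the computational basis
vector `e_a` is indexed by a pattern `a : K → ZMod 2`. -/
abbrev HS (K : Type*) := EuclideanSpace ℂ (K → ZMod 2)

section Single
variable {K : Type*} [Fintype K] [DecidableEq K]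

/-- Pauli X operator: `X(p) e_a = e_{a+p}`. -/
def XOp (p : K → ZMod 2) : HS K →ₗ[ℂ] HS K where
  toFun ψ := WithLp.toLp 2 <| fun a => ψ (a + p)
  map_add' _ _ := rfl
  map_smul' _ _ := rfl

/-- Pauli Z operator: `Z(p) e_a = (-1)^{Σ_i p i * a i} e_a`. -/
def ZOp (p : K → ZMod 2) : HS K →ₗ[ℂ] HS K where
  toFun ψ := WithLp.toLp 2 <| fun a => sgn (∑ i, p i * a i) * ψ a
  map_add' ψ φ := by
    ext a
    exact mul_add _ _ _
  map_smul' c ψ := by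
    ext a
    simp only [RingHom.id_apply, PiLp.smul_apply, smul_eq_mul]
    ring

end Single

section Pair

variable {I J : Type*} [Fintype I] [DecidableEq I] [Fintype J] [DecidableEq J]

/-- Hilbert space of the matter qubits (labelled by `I`) tensored with the gauge
qubits (labelled by `J`): the computational basis vector indexed by `(a, b)`
realizes the tensor product `e_a ⊗ f_b`. -/
abbrev HS2 (I J : Type*) := EuclideanSpace ℂ ((I → ZMod 2) × (J → ZMod 2))

/-- `X(p) ⊗ X_g(q)` on `H_m ⊗ H_g`. -/
def XXOp (p : I → ZMod 2) (q : J → ZMod 2) : HS2 I J →ₗ[ℂ] HS2 I J where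
  toFun ψ := WithLp.toLp 2 <| fun ab => ψ (ab.1 + p, ab.2 + q)
  map_add' _ _ := rfl
  map_smul' _ _ := rfl

/-- `X(p) ⊗ Z_g(q)` on `H_m ⊗ H_g`. -/
def XZOp (p : I → ZMod 2) (q : J → ZMod 2) : HS2 I J →ₗ[ℂ] HS2 I J where
  toFun ψ := WithLp.toLp 2 <| fun ab => sgn (∑ j, q j * ab.2 j) * ψ (ab.1 + p, ab.2)
  map_add' ψ φ := by
    ext ab
    exact mul_add _ _ _
  map_smul' c ψ := by
    ext ab
    simp only [RingHom.id_apply, PiLp.smul_apply, smul_eq_mul]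
    ring

/-- `Z(p) ⊗ X_g(q)` on `H_m ⊗ H_g`. -/
def ZXOp (p : I → ZMod 2) (q : J → ZMod 2) : HS2 I J →ₗ[ℂ] HS2 I J where
  toFun ψ := WithLp.toLp 2 <| fun ab => sgn (∑ i, p i * ab.1 i) * ψ (ab.1, ab.2 + q)
  map_add' ψ φ := by
    ext ab
    exact mul_add _ _ _
  map_smul' c ψ := by
    ext ab
    simp only [RingHom.id_apply, PiLp.smul_apply, smul_eq_mul]
    ring

/-- The flux operator `1 ⊗ Z_g(k)` on `H_m ⊗ H_g`. -/
def IZOp (k : J → ZMod 2) : HS2 I J →ₗ[ℂ] HS2 I J := XZOp 0 k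

variable (A : J → Finset I)

/-- The boundary map `∂ : (I → ZMod 2) → (J → ZMod 2)`, `(∂p)(j) = Σ_{i ∈ A j} p(i)`. -/
def bnd (p : I → ZMod 2) : J → ZMod 2 := fun j => ∑ i ∈ A j, p i

/-- The coboundary map `δ : (J → ZMod 2) → (I → ZMod 2)`, `(δk)(i) = Σ_{j : i ∈ A j} k(j)`. -/
def cobnd (k : J → ZMod 2) : I → ZMod 2 :=
  fun i => ∑ j ∈ Finset.univ.filter (fun j => i ∈ A j), k j

/-- The indicator pattern `χ_i` of a matter qubit `i`. -/
def chi (i : I) : I → ZMod 2 := Pi.single i 1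

/-- The indicator pattern `κ_j` of a gauge qubit `j`. -/
def kap (j : J) : J → ZMod 2 := Pi.single j 1

/-- The local gauge constraint `C_i = X(χ_i) ⊗ X_g(∂χ_i)`. -/
def C (i : I) : HS2 I J →ₗ[ℂ] HS2 I J := XXOp (chi i) (bnd A (chi i))

lemma XXOp_mul (p p' : I → ZMod 2) (q q' : J → ZMod 2) :
    (XXOp p q : Module.End ℂ (HS2 I J)) * XXOp p' q' = XXOp (p + p') (q + q') := by
  apply LinearMap.ext
  intro ψ
  ext ab
  show ψ (ab.1 + p + p', ab.2 + q + q') = ψ (ab.1 + (p + p'), ab.2 + (q + q'))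
  rw [add_assoc, add_assoc]

lemma C_commute (i i' : I) : Commute (C A i) (C A i') := by
  show C A i * C A i' = C A i' * C A i
  unfold C
  rw [XXOp_mul, XXOp_mul, add_comm (chi i) (chi i'),
    add_comm (bnd A (chi i)) (bnd A (chi i'))]

/-- The product of gauge constraints `C^s = Π_{i : s i = 1} C_i`. -/
def Cprod (s : I → ZMod 2) : Module.End ℂ (HS2 I J) :=
  (Finset.univ.filter fun i => s i = 1).noncommProd (fun i => C A i)
    (fun i _ j _ _ => C_commute A i j)

lemma Chalf_commute (i i' : I) :
    Commute ((2 : ℂ)⁻¹ • (1 + C A i)) ((2 : ℂ)⁻¹ • (1 + C A i')) := by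
  have h : Commute (1 + C A i) (1 + C A i') :=
    (Commute.one_left _).add_left ((Commute.one_right _).add_right (C_commute A i i'))
  exact (h.smul_left _).smul_right _

/-- The projector `P = Π_{i ∈ I} (1 + C_i)/2` onto the gauge invariant subspace. -/
def Pproj : Module.End ℂ (HS2 I J) :=
  Finset.univ.noncommProd (fun i => (2 : ℂ)⁻¹ • (1 + C A i))
    (fun i _ j _ _ => Chalf_commute A i j)

/-- `ψ ↦ ψ ⊗ f_0`, the inclusion `1_m ⊗ |f_0⟩ : H_m → H_m ⊗ H_g` determined by the
all-zeros gauge basis vector `f_0`. -/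
def incl : HS I →ₗ[ℂ] HS2 I J where
  toFun ψ := WithLp.toLp 2 <| fun ab => if ab.2 = 0 then ψ ab.1 else 0
  map_add' ψ φ := by
    ext ab
    by_cases h : ab.2 = 0 <;> simp [h]
  map_smul' c ψ := by
    ext ab
    by_cases h : ab.2 = 0 <;> simp [h]

/-- The compression `1_m ⊗ ⟨f_0| : H_m ⊗ H_g → H_m`. -/
def res0 : HS2 I J →ₗ[ℂ] HS I where
  toFun ψ := WithLp.toLp 2 <| fun a => ψ (a, 0)
  map_add' _ _ := rfl
  map_smul' _ _ := rfl

/-- The state gauging map `G ψ = P (ψ ⊗ f_0)`. -/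
def Gmap : HS I →ₗ[ℂ] HS2 I J := Pproj A ∘ₗ incl

/-- The operator gauging map `𝒢[O] = Σ_{s : I → ZMod 2} C^s (O ⊗ |f_0⟩⟨f_0|) C^s`,
where `O ⊗ |f_0⟩⟨f_0| = incl ∘ O ∘ res0`. -/
def gaugeOp (O : Module.End ℂ (HS I)) : Module.End ℂ (HS2 I J) :=
  ∑ s : I → ZMod 2, Cprod A s * (incl ∘ₗ O ∘ₗ res0) * Cprod A s

/-- The joint fixed subspace `{v | C_i v = v for all i}` of the gauge constraints. -/
def fixedSub : Submodule ℂ (HS2 I J) where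
  carrier := {v | ∀ i, C A i v = v}
  add_mem' := by
    intro x y hx hy i
    rw [map_add, hx i, hy i]
  zero_mem' := by
    intro i
    simp
  smul_mem' := by
    intro c x hx i
    rw [map_smul, hx i]

/-- The symmetric subspace `{ψ | X(s) ψ = ψ for all s with ∂s = 0}` of the matter space. -/
def symmSub : Submodule ℂ (HS I) where
  carrier := {ψ | ∀ s, bnd A s = 0 → XOp s ψ = ψ}
  add_mem' := by
    intro x y hx hy s hs
    rw [map_add, hx s hs, hy s hs]
  zero_mem' := by
    intro s hs
    simp
  smul_mem' := by
    intro c x hx s hs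
    rw [map_smul, hx s hs]

/-- The cluster stabilizer `K_i = X(χ_i) ⊗ Z_g(∂χ_i)`. -/
def Kst (i : I) : Module.End ℂ (HS2 I J) := XZOp (chi i) (bnd A (chi i))

/-- The cluster stabilizer `L_j = Z(δκ_j) ⊗ X_g(κ_j)`. -/
def Lst (j : J) : Module.End ℂ (HS2 I J) := ZXOp (cobnd A (kap j)) (kap j)

/-- The disentangling circuit of controlled-X gates from each matter qubit to its
adjacent gauge qubits: `V (e_a ⊗ f_b) = e_a ⊗ f_{b + ∂a}`. -/
def Vequiv : HS2 I J ≃ₗ[ℂ] HS2 I J where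
  toFun ψ := WithLp.toLp 2 <| fun ab => ψ (ab.1, ab.2 + bnd A ab.1)
  invFun ψ := WithLp.toLp 2 <| fun ab => ψ (ab.1, ab.2 + bnd A ab.1)
  map_add' _ _ := rfl
  map_smul' _ _ := rfl
  left_inv ψ := by
    ext ab
    show ψ (ab.1, ab.2 + bnd A ab.1 + bnd A ab.1) = ψ ab
    rw [add_assoc, zmodfun_add_self, add_zero]
  right_inv ψ := by
    ext ab
    show ψ (ab.1, ab.2 + bnd A ab.1 + bnd A ab.1) = ψ ab
    rw [add_assoc, zmodfun_add_self, add_zero]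

/-- The circuit of controlled-Z gates along the edges of the bipartite graph:
`U (e_a ⊗ f_b) = (-1)^{Σ_j (∂a)(j)·b(j)} e_a ⊗ f_b`. -/
def Uequiv : HS2 I J ≃ₗ[ℂ] HS2 I J where
  toFun ψ := WithLp.toLp 2 <| fun ab => sgn (∑ j, bnd A ab.1 j * ab.2 j) * ψ ab
  invFun ψ := WithLp.toLp 2 <| fun ab => sgn (∑ j, bnd A ab.1 j * ab.2 j) * ψ ab
  map_add' ψ φ := by
    ext ab
    exact mul_add _ _ _
  map_smul' c ψ := by
    ext ab
    simp only [RingHom.id_apply, PiLp.smul_apply, smul_eq_mul]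
    ring
  left_inv ψ := by
    ext ab
    show sgn _ * (sgn _ * ψ ab) = ψ ab
    rw [← mul_assoc, sgn_mul_self, one_mul]
  right_inv ψ := by
    ext ab
    show sgn _ * (sgn _ * ψ ab) = ψ ab
    rw [← mul_assoc, sgn_mul_self, one_mul]


section AuxLemmas

variable {I J : Type*} [Fintype I] [DecidableEq I] [Fintype J] [DecidableEq J]
variable (A : J → Finset I)

lemma bnd_add' (p p' : I → ZMod 2) : bnd A (p + p') = bnd A p + bnd A p' := by
  funext j; simp [bnd, Finset.sum_add_distrib]

lemma bnd_zero' : bnd A (0 : I → ZMod 2) = 0 := by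
  funext j; simp [bnd]

lemma XXOp_zero : (XXOp (0 : I → ZMod 2) (0 : J → ZMod 2)) = (1 : Module.End ℂ (HS2 I J)) := by
  apply LinearMap.ext; intro ψ; ext ab
  show ψ (ab.1 + 0, ab.2 + 0) = ψ ab
  rw [add_zero, add_zero]

lemma sum_chi (U : Finset I) :
    (∑ i ∈ U, chi i : I → ZMod 2) = fun i => if i ∈ U then 1 else 0 := by
  funext i
  rw [Finset.sum_apply]
  simp [chi, Pi.single_apply]

lemma noncommProd_C (T : Finset I) :
    T.noncommProd (fun i => C A i) (fun i _ j _ _ => C_commute A i j)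
      = XXOp (∑ i ∈ T, chi i) (bnd A (∑ i ∈ T, chi i)) := by
  induction T using Finset.cons_induction with
  | empty =>
      simp [Finset.noncommProd_empty, bnd_zero', XXOp_zero]
      exact Finset.noncommProd_empty _ _
  | cons a T ha ih =>
      refine (Finset.noncommProd_cons ..).trans ?_
      rw [ih, Finset.sum_cons]
      show (C A a) * _ = _
      rw [C, XXOp_mul, ← bnd_add']

lemma Cprod_eq (s : I → ZMod 2) : Cprod A s = XXOp s (bnd A s) := by
  have hs : (∑ i ∈ Finset.univ.filter (fun i => s i = 1), chi i : I → ZMod 2) = s := by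
    rw [sum_chi]
    funext i
    simp only [Finset.mem_filter, Finset.mem_univ, true_and]
    have : ∀ t : ZMod 2, (if t = 1 then (1 : ZMod 2) else 0) = t := by decide
    exact this (s i)
  rw [Cprod, noncommProd_C, hs]

lemma noncommProd_half (T : Finset I) :
    T.noncommProd (fun i => (2:ℂ)⁻¹ • (1 + C A i)) (fun i _ j _ _ => Chalf_commute A i j)
      = ((2:ℂ) ^ T.card)⁻¹ •
        ∑ U ∈ T.powerset, XXOp (∑ i ∈ U, chi i) (bnd A (∑ i ∈ U, chi i)) := by
  induction T using Finset.cons_induction with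
  | empty => simp [Finset.noncommProd_empty, bnd_zero', XXOp_zero]
  | cons a T ha ih =>
      refine (Finset.noncommProd_cons ..).trans ?_
      rw [ih]
      have step : ∀ U ∈ T.powerset,
          C A a * XXOp (∑ i ∈ U, chi i) (bnd A (∑ i ∈ U, chi i))
            = XXOp (∑ i ∈ insert a U, chi i) (bnd A (∑ i ∈ insert a U, chi i)) := by
        intro U hU
        have haU : a ∉ U := fun h => ha (Finset.mem_powerset.mp hU h)
        rw [C, XXOp_mul, ← bnd_add', Finset.sum_insert haU]
      rw [smul_mul_assoc, mul_smul_comm, smul_smul, add_mul, one_mul,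
        Finset.mul_sum, Finset.sum_congr rfl step, Finset.cons_eq_insert,
        Finset.sum_powerset_insert ha]
      congr 1
      rw [Finset.card_insert_of_notMem ha, pow_succ, mul_inv]
      ring

def zmodFinsetEquiv : Finset I ≃ (I → ZMod 2) where
  toFun U := fun i => if i ∈ U then 1 else 0
  invFun s := Finset.univ.filter (fun i => s i = 1)
  left_inv U := by
    ext i
    simp
  right_inv s := by
    funext i
    simp only [Finset.mem_filter, Finset.mem_univ, true_and]
    have : ∀ t : ZMod 2, (if t = 1 then (1 : ZMod 2) else 0) = t := by decide
    exact this (s i)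

lemma Pproj_eq :
    Pproj A = ((2:ℂ) ^ Fintype.card I)⁻¹ • ∑ s : I → ZMod 2, XXOp s (bnd A s) := by
  rw [Pproj, noncommProd_half, Finset.card_univ, Finset.powerset_univ]
  congr 1
  apply Fintype.sum_equiv (zmodFinsetEquiv (I := I))
  intro U
  rw [sum_chi]
  rfl

lemma Gmap_apply (ψ : HS I) (a : I → ZMod 2) (b : J → ZMod 2) :
    Gmap A ψ (a, b) = ((2:ℂ) ^ Fintype.card I)⁻¹ *
      ∑ s ∈ Finset.univ.filter (fun s => bnd A s = b), ψ (a + s) := by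
  show Pproj A (incl ψ) (a, b) = _
  rw [Pproj_eq]
  have h1 : (((2:ℂ) ^ Fintype.card I)⁻¹ • ∑ s : I → ZMod 2, XXOp s (bnd A s)) (incl ψ)
      = ((2:ℂ) ^ Fintype.card I)⁻¹ • ((∑ s : I → ZMod 2, XXOp s (bnd A s)) (incl (J := J) ψ)) :=
    rfl
  rw [h1]
  have h2 : ((∑ s : I → ZMod 2, XXOp s (bnd A s)) (incl (J := J) ψ))
      = ∑ s : I → ZMod 2, XXOp s (bnd A s) (incl ψ) := by
    rw [LinearMap.sum_apply]
  rw [h2]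
  have h3 : (((2:ℂ) ^ Fintype.card I)⁻¹ •
        ∑ s : I → ZMod 2, XXOp s (bnd A s) (incl (J := J) ψ)) (a, b)
      = ((2:ℂ) ^ Fintype.card I)⁻¹ *
        (∑ s : I → ZMod 2, XXOp s (bnd A s) (incl (J := J) ψ)) (a, b) := rfl
  rw [h3]
  congr 1
  have h4 : (∑ s : I → ZMod 2, XXOp s (bnd A s) (incl (J := J) ψ)) (a, b)
      = ∑ s : I → ZMod 2, (XXOp s (bnd A s) (incl (J := J) ψ)) (a, b) := by
    rw [WithLp.ofLp_sum]
    exact Finset.sum_apply _ _ _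
  rw [h4]
  have h5 : ∀ s ∈ (Finset.univ : Finset (I → ZMod 2)),
      (XXOp s (bnd A s)) (incl (J := J) ψ) (a, b) = if bnd A s = b then ψ (a + s) else 0 := by
    intro s _
    show (if b + bnd A s = 0 then ψ (a + s) else 0) = if bnd A s = b then ψ (a + s) else 0
    congr 1
    simp only [eq_iff_iff]
    constructor
    · intro h
      have h' : b + (b + bnd A s) = b + 0 := by rw [h]
      rw [← add_assoc, zmodfun_add_self, zero_add, add_zero] at h'
      exact h'
    · intro h
      rw [h, zmodfun_add_self]
  rw [Finset.sum_congr rfl h5]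
  exact (Finset.sum_filter _ _).symm

lemma fiber_card (s₀ : I → ZMod 2) :
    (Finset.univ.filter fun s => bnd A s = bnd A s₀).card
      = (Finset.univ.filter fun s => bnd A s = 0).card := by
  apply Finset.card_bij' (i := fun s _ => s + s₀) (j := fun t _ => t + s₀)
  · intro s hs
    simp only [Finset.mem_filter, Finset.mem_univ, true_and] at hs ⊢
    rw [bnd_add', hs, zmodfun_add_self]
  · intro t ht
    simp only [Finset.mem_filter, Finset.mem_univ, true_and] at ht ⊢
    rw [bnd_add', ht, zero_add]
  · intro s _
    rw [add_assoc, zmodfun_add_self, add_zero]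
  · intro t _
    rw [add_assoc, zmodfun_add_self, add_zero]

lemma Ncard_eq :
    (Nat.card {s : I → ZMod 2 // bnd A s = 0})
      = (Finset.univ.filter fun s => bnd A s = 0).card := by
  rw [Nat.card_eq_fintype_card, Fintype.card_subtype]

lemma symm_shift {ψ : HS I} (hψ : ∀ s : I → ZMod 2, bnd A s = 0 → XOp s ψ = ψ)
    {s : I → ZMod 2} (hs : bnd A s = 0) (a : I → ZMod 2) : ψ (a + s) = ψ a := by
  have := hψ s hs
  exact congrArg (fun v : HS I => v a) this

lemma norm_sq_eq_sum {K : Type*} [Fintype K] (v : EuclideanSpace ℂ K) :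
    ‖v‖ ^ 2 = ∑ k, ‖v k‖ ^ 2 := by
  rw [EuclideanSpace.norm_eq, Real.sq_sqrt]
  positivity

end AuxLemmas

/-- (a) For symmetric `ψ`, `‖G ψ‖² = (|S| / 2^{|I|}) ‖ψ‖²`; in particular
`G` is injective on the symmetric subspace. (b) If `H` is symmetric and `ψ` is a symmetric
eigenvector with `H ψ = λ ψ`, then `𝒢[H] (G ψ) = |S| λ · (G ψ)`. -/
theorem Gmap_preserves_eigenstates (A : J → Finset I) :
    (∀ ψ : HS I, (∀ s : I → ZMod 2, bnd A s = 0 → XOp s ψ = ψ) →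
      ‖Gmap A ψ‖ ^ 2
        = ((Nat.card {s : I → ZMod 2 // bnd A s = 0} : ℝ) / 2 ^ Fintype.card I) * ‖ψ‖ ^ 2)
    ∧ (∀ ψ φ : HS I, (∀ s : I → ZMod 2, bnd A s = 0 → XOp s ψ = ψ) →
        (∀ s : I → ZMod 2, bnd A s = 0 → XOp s φ = φ) →
        Gmap A ψ = Gmap A φ → ψ = φ)
    ∧ (∀ (H : Module.End ℂ (HS I)) (ψ : HS I) (lam : ℂ),
        (∀ s : I → ZMod 2, bnd A s = 0 → H * XOp s = XOp s * H) →
        (∀ s : I → ZMod 2, bnd A s = 0 → XOp s ψ = ψ) →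
        H ψ = lam • ψ →
        gaugeOp A H (Gmap A ψ)
          = ((Nat.card {s : I → ZMod 2 // bnd A s = 0} : ℂ) * lam) • Gmap A ψ) := by
  classical
  set n := Fintype.card I with hn
  have h2n : ((2:ℝ) ^ n) ≠ 0 := by positivity
  have h2nc : ((2:ℂ) ^ n) ≠ 0 := by
    exact pow_ne_zero _ two_ne_zero
  set N : ℕ := (Finset.univ.filter fun s : I → ZMod 2 => bnd A s = 0).card with hN
  have hNcard : (Nat.card {s : I → ZMod 2 // bnd A s = 0}) = N := Ncard_eq A
  have hNpos : 0 < (N : ℝ) := by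
    have h0 : (0 : I → ZMod 2) ∈ Finset.univ.filter fun s : I → ZMod 2 => bnd A s = 0 := by
      simp [bnd_zero']
    exact_mod_cast Finset.card_pos.mpr ⟨0, h0⟩
  have parta : ∀ ψ : HS I, (∀ s : I → ZMod 2, bnd A s = 0 → XOp s ψ = ψ) →
      ‖Gmap A ψ‖ ^ 2 = ((N : ℝ) / 2 ^ n) * ‖ψ‖ ^ 2 := by
    intro ψ hψ
    have key : ∀ b : J → ZMod 2, (∑ a : I → ZMod 2, ‖Gmap A ψ (a, b)‖ ^ 2)
        = ((Finset.univ.filter fun s : I → ZMod 2 => bnd A s = b).card : ℝ)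
          * (N : ℝ) / ((2:ℝ) ^ n) ^ 2 * ∑ a : I → ZMod 2, ‖ψ a‖ ^ 2 := by
      intro b
      by_cases hb : (Finset.univ.filter fun s : I → ZMod 2 => bnd A s = b).Nonempty
      · obtain ⟨s₀, hs₀mem⟩ := hb
        have hs₀ : bnd A s₀ = b := (Finset.mem_filter.mp hs₀mem).2
        have hcard : (Finset.univ.filter fun s : I → ZMod 2 => bnd A s = b).card = N := by
          rw [← hs₀, fiber_card A s₀, hN]
        have hval : ∀ a : I → ZMod 2,
            Gmap A ψ (a, b) = ((2:ℂ) ^ n)⁻¹ * ((N : ℂ) * ψ (a + s₀)) := by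
          intro a
          rw [Gmap_apply]
          congr 1
          have hterm : ∀ s ∈ Finset.univ.filter fun s : I → ZMod 2 => bnd A s = b,
              ψ (a + s) = ψ (a + s₀) := by
            intro s hs
            have hs' : bnd A s = b := (Finset.mem_filter.mp hs).2
            have hdiff : bnd A (s₀ + s) = 0 := by
              rw [bnd_add', hs', hs₀, zmodfun_add_self]
            have h := symm_shift A hψ hdiff (a + s₀)
            rw [← h]
            congr 1
            rw [add_assoc, ← add_assoc s₀ s₀ s, zmodfun_add_self, zero_add]
          rw [Finset.sum_congr rfl hterm, Finset.sum_const, hcard, nsmul_eq_mul]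
        have hns : ∀ a : I → ZMod 2,
            ‖Gmap A ψ (a, b)‖ ^ 2
              = (((2:ℝ) ^ n)⁻¹ * (N : ℝ)) ^ 2 * ‖ψ (a + s₀)‖ ^ 2 := by
          intro a
          rw [hval a, norm_mul, norm_mul, norm_inv, norm_pow, Complex.norm_natCast]
          have h2 : ‖(2:ℂ)‖ = 2 := by
            simp
          rw [h2]
          ring
        rw [Finset.sum_congr rfl (fun a _ => hns a), ← Finset.mul_sum]
        have hshift : (∑ a : I → ZMod 2, ‖ψ (a + s₀)‖ ^ 2) = ∑ a : I → ZMod 2, ‖ψ a‖ ^ 2 :=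
          Fintype.sum_equiv (Equiv.addRight s₀) _ _ (fun a => rfl)
        rw [hshift, hcard]
        ring
      · rw [Finset.not_nonempty_iff_eq_empty] at hb
        have hz : ∀ a : I → ZMod 2, Gmap A ψ (a, b) = 0 := by
          intro a
          rw [Gmap_apply, hb, Finset.sum_empty, mul_zero]
        rw [hb]
        simp [hz]
    rw [norm_sq_eq_sum (Gmap A ψ), norm_sq_eq_sum ψ, Fintype.sum_prod_type, Finset.sum_comm]
    rw [Finset.sum_congr rfl (fun b _ => key b)]
    have hsumcard : (∑ b : J → ZMod 2,
        ((Finset.univ.filter fun s : I → ZMod 2 => bnd A s = b).card : ℝ)) = (2:ℝ) ^ n := by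
      have h1 : (Finset.univ : Finset (I → ZMod 2)).card
          = ∑ b : J → ZMod 2, (Finset.univ.filter fun s : I → ZMod 2 => bnd A s = b).card :=
        Finset.card_eq_sum_card_fiberwise (fun s _ => Finset.mem_univ (bnd A s))
      have h2 : (Finset.univ : Finset (I → ZMod 2)).card = 2 ^ n := by
        rw [Finset.card_univ, Fintype.card_fun, ZMod.card, hn]
      rw [← Nat.cast_sum, ← h1, h2]
      push_cast
      ring
    calc (∑ b : J → ZMod 2,
          ((Finset.univ.filter fun s : I → ZMod 2 => bnd A s = b).card : ℝ)
            * (N : ℝ) / ((2:ℝ) ^ n) ^ 2 * ∑ a : I → ZMod 2, ‖ψ a‖ ^ 2)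
        = (∑ b : J → ZMod 2,
            ((Finset.univ.filter fun s : I → ZMod 2 => bnd A s = b).card : ℝ))
            * ((N : ℝ) / ((2:ℝ) ^ n) ^ 2 * ∑ a : I → ZMod 2, ‖ψ a‖ ^ 2) := by
          rw [Finset.sum_mul]
          apply Finset.sum_congr rfl
          intro b _
          ring
      _ = ((N : ℝ) / 2 ^ n) * ∑ a : I → ZMod 2, ‖ψ a‖ ^ 2 := by
          rw [hsumcard]
          field_simp
  refine ⟨fun ψ hψ => by rw [parta ψ hψ, hNcard], ?_, ?_⟩
  · intro ψ φ hψ hφ heq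
    have hd : ∀ s : I → ZMod 2, bnd A s = 0 → XOp s (ψ - φ) = ψ - φ := fun s hs => by
      rw [map_sub, hψ s hs, hφ s hs]
    have h0 : Gmap A (ψ - φ) = 0 := by rw [map_sub, heq, sub_self]
    have h1 := parta (ψ - φ) hd
    rw [h0, norm_zero] at h1
    have h2 : ‖ψ - φ‖ ^ 2 = 0 := by
      have hc : (0:ℝ) < (N : ℝ) / 2 ^ n := by positivity
      nlinarith [h1]
    have h3 : ψ - φ = 0 := by
      rw [pow_eq_zero_iff (by norm_num : (2:ℕ) ≠ 0)] at h2
      exact norm_eq_zero.mp h2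
    exact sub_eq_zero.mp h3
  · intro H ψ lam hH hψ hev
    have step1 : ∀ s : I → ZMod 2,
        res0 (Cprod A s (Gmap A ψ)) = (((2:ℂ) ^ n)⁻¹ * (N : ℂ)) • ψ := by
      intro s
      ext a
      show Cprod A s (Gmap A ψ) (a, 0) = (((2:ℂ) ^ n)⁻¹ * (N : ℂ)) * ψ a
      rw [Cprod_eq]
      show Gmap A ψ (a + s, 0 + bnd A s) = _
      rw [zero_add, Gmap_apply]
      have hterm : ∀ t ∈ Finset.univ.filter fun t : I → ZMod 2 => bnd A t = bnd A s,
          ψ (a + s + t) = ψ a := by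
        intro t ht
        have ht' : bnd A t = bnd A s := (Finset.mem_filter.mp ht).2
        have hst : bnd A (s + t) = 0 := by rw [bnd_add', ht', zmodfun_add_self]
        have h := symm_shift A hψ hst a
        rw [← add_assoc] at h
        exact h
      rw [Finset.sum_congr rfl hterm, Finset.sum_const, fiber_card A s, ← hN, nsmul_eq_mul]
      ring
    have step2 : gaugeOp A H (Gmap A ψ)
        = ∑ s : I → ZMod 2, (((2:ℂ) ^ n)⁻¹ * (N : ℂ) * lam) • Cprod A s (incl ψ) := by
      unfold gaugeOp
      rw [LinearMap.sum_apply]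
      apply Finset.sum_congr rfl
      intro s _
      rw [Module.End.mul_apply, Module.End.mul_apply, LinearMap.comp_apply, LinearMap.comp_apply,
        step1 s, map_smul, hev, map_smul, map_smul, map_smul, map_smul, smul_smul]
    have step3 : (∑ s : I → ZMod 2, Cprod A s (incl (J := J) ψ)) = ((2:ℂ) ^ n) • Gmap A ψ := by
      have hG : Gmap A ψ = ((2:ℂ) ^ n)⁻¹ • ∑ s : I → ZMod 2, Cprod A s (incl (J := J) ψ) := by
        show Pproj A (incl ψ) = _
        rw [Pproj_eq, LinearMap.smul_apply, LinearMap.sum_apply]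
        congr 1
        apply Finset.sum_congr rfl
        intro s _
        rw [Cprod_eq]
      rw [hG, smul_smul, mul_inv_cancel₀ h2nc, one_smul]
    rw [step2, ← Finset.smul_sum, step3, smul_smul, hNcard]
    congr 1
    field_simp

end Pair

end GaugingFractal
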